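/- For any level-L quadrant Q^end, the interior of Y_0 = ⋃_{Q=0}^{Q^end} Ω(Q) ⊆ ℝ^d is star-shaped; in fact it is star-shaped with respect to the midpoint (2^{−L−1}, …, 2^{−L−1}) of Ω(0). -/

import Mathlib

/-- The `r`-th coordinate (1 ≤ r ≤ d) of a level-`L` quadrant `Q` in dimension `d`. -/
def mortonCoord (d L r Q : ℕ) : ℕ :=
  ∑ ℓ ∈ Finset.range L, (Q / 2 ^ (ℓ * d + (r - 1)) % 2) * 2 ^ ℓ

/-- Two level-`L` quadrants are face-neighbors: they differ by exactly one in exactly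
one coordinate and agree in all other coordinates. -/
def MortonFaceNbr (d L Q Q' : ℕ) : Prop :=
  Q ≠ Q' ∧ ∃ r, 1 ≤ r ∧ r ≤ d ∧
    ((mortonCoord d L r Q : ℤ) - (mortonCoord d L r Q' : ℤ)).natAbs = 1 ∧
    ∀ s, 1 ≤ s → s ≤ d → s ≠ r → mortonCoord d L s Q = mortonCoord d L s Q'

/-- A set of level-`L` quadrants is face-connected: the graph on `S` whose edges join
face-neighbors is connected. -/
def MortonFaceConnected (d L : ℕ) (S : Set ℕ) : Prop :=
  ∀ Q ∈ S, ∀ Q' ∈ S,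
    Relation.ReflTransGen (fun a b => a ∈ S ∧ b ∈ S ∧ MortonFaceNbr d L a b) Q Q'

/-- `S` has at most `n` face-connected components: it can be written as a union of `n`
face-connected subsets. -/
def MortonCompBound (d L : ℕ) (S : Set ℕ) (n : ℕ) : Prop :=
  ∃ f : Fin n → Set ℕ, S = ⋃ i, f i ∧ ∀ i, MortonFaceConnected d L (f i)

/-- The closed box `Ω(Q) = Π_r [2^{-L} Q_r, 2^{-L}(Q_r + 1)] ⊆ ℝ^d` occupied by the
level-`L` quadrant `Q`. -/
def mortonOmega (d L Q : ℕ) : Set (Fin d → ℝ) :=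
  {x | ∀ r : Fin d,
    (mortonCoord d L ((r : ℕ) + 1) Q : ℝ) / 2 ^ L ≤ x r ∧
    x r ≤ ((mortonCoord d L ((r : ℕ) + 1) Q : ℝ) + 1) / 2 ^ L}

/-- `A ⊆ ℝ^d` is star-shaped with respect to `p`. -/
def StarShapedWrt {d : ℕ} (A : Set (Fin d → ℝ)) (p : Fin d → ℝ) : Prop :=
  p ∈ A ∧ ∀ x ∈ A, segment ℝ p x ⊆ A

/-- `A ⊆ ℝ^d` is star-shaped with respect to some point of `A`. -/
def StarShaped {d : ℕ} (A : Set (Fin d → ℝ)) : Prop :=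
  ∃ p, StarShapedWrt A p

namespace MortonAux

def interleave : ℕ → ℕ → (ℕ → ℕ) → ℕ
  | _, 0, _ => 0
  | d, (L+1), k =>
      (∑ r ∈ Finset.range d, (k r % 2) * 2 ^ r) + 2 ^ d * interleave d L (fun r => k r / 2)

lemma mc_zero (d r Q : ℕ) : mortonCoord d 0 r Q = 0 := by
  simp [mortonCoord]

lemma mc_succ (d L r Q : ℕ) :
    mortonCoord d (L + 1) (r + 1) Q
      = Q / 2 ^ r % 2 + 2 * mortonCoord d L (r + 1) (Q / 2 ^ d) := by
  unfold mortonCoord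
  rw [Finset.sum_range_succ']
  simp only [Nat.add_sub_cancel, zero_mul, zero_add, pow_zero, mul_one]
  rw [add_comm, Finset.mul_sum]
  congr 1
  refine Finset.sum_congr rfl fun ℓ _ => ?_
  have h1 : Q / 2 ^ ((ℓ + 1) * d + r) = Q / 2 ^ d / 2 ^ (ℓ * d + r) := by
    rw [Nat.div_div_eq_div_mul, ← pow_add]
    ring_nf
  rw [h1]
  ring

lemma bitvec_lt (n : ℕ) (b : ℕ → ℕ) (hb : ∀ s, b s ≤ 1) :
    ∑ s ∈ Finset.range n, b s * 2 ^ s < 2 ^ n := by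
  induction n with
  | zero => simp
  | succ n ih =>
      rw [Finset.sum_range_succ]
      have := hb n
      have : b n * 2 ^ n ≤ 2 ^ n := by
        calc b n * 2 ^ n ≤ 1 * 2 ^ n := Nat.mul_le_mul_right _ this
        _ = 2 ^ n := one_mul _
      have h2 : (2:ℕ) ^ (n+1) = 2 ^ n + 2 ^ n := by ring
      omega

lemma mc_lt (d L r Q : ℕ) : mortonCoord d L (r + 1) Q < 2 ^ L := by
  have := bitvec_lt L (fun ℓ => Q / 2 ^ (ℓ * d + (r + 1 - 1)) % 2) (fun s => Nat.lt_succ_iff.mp (Nat.mod_lt _ (by norm_num)))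
  simpa [mortonCoord] using this

lemma bitvec_div (n r : ℕ) (hr : r < n) (b : ℕ → ℕ) (hb : ∀ s, b s ≤ 1) :
    (∑ s ∈ Finset.range n, b s * 2 ^ s) / 2 ^ r % 2 = b r := by
  induction n with
  | zero => omega
  | succ n ih =>
      rw [Finset.sum_range_succ]
      rcases Nat.lt_or_ge r n with h | h
      · have hd : (2:ℕ) ^ n = 2 ^ (n - r) * 2 ^ r := by
          rw [← pow_add]; congr 1; omega
        rw [hd, ← mul_assoc, Nat.add_mul_div_right _ _ (pow_pos (show (0:ℕ) < 2 by norm_num) r)]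
        have h2 : 2 ∣ b n * 2 ^ (n - r) := by
          have : (2:ℕ) ^ (n - r) = 2 * 2 ^ (n - r - 1) := by
            rw [← pow_succ']; congr 1; omega
          exact ⟨b n * 2 ^ (n - r - 1), by rw [this]; ring⟩
        obtain ⟨c, hc⟩ := h2
        rw [hc, show (∑ x ∈ Finset.range n, b x * 2 ^ x) / 2 ^ r + 2 * c
            = (∑ x ∈ Finset.range n, b x * 2 ^ x) / 2 ^ r + c * 2 by ring,
          Nat.add_mul_mod_self_right]
        exact ih h
      · have hrn : r = n := by omega
        subst hrn
        have hS : ∑ s ∈ Finset.range r, b s * 2 ^ s < 2 ^ r := bitvec_lt r b hb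
        rw [Nat.add_mul_div_right _ _ (pow_pos (show (0:ℕ) < 2 by norm_num) r),
          Nat.div_eq_of_lt hS, zero_add]
        have := hb r; omega

lemma sum_bits_mod (n Q : ℕ) :
    ∑ r ∈ Finset.range n, (Q / 2 ^ r % 2) * 2 ^ r = Q % 2 ^ n := by
  induction n with
  | zero => simp [Nat.mod_one]
  | succ n ih =>
      rw [Finset.sum_range_succ, ih]
      have : (2:ℕ) ^ (n + 1) = 2 ^ n * 2 := by ring
      rw [this, Nat.mod_mul]
      ring

end MortonAux

namespace MortonAux

lemma low_lt (d : ℕ) (k : ℕ → ℕ) :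
    ∑ r ∈ Finset.range d, (k r % 2) * 2 ^ r < 2 ^ d :=
  bitvec_lt d _ (fun s => Nat.lt_succ_iff.mp (Nat.mod_lt _ (by norm_num)))

lemma interleave_lt (d L : ℕ) (k : ℕ → ℕ) : interleave d L k < 2 ^ (d * L) := by
  induction L generalizing k with
  | zero => simp [interleave]
  | succ L ih =>
      have h1 := low_lt d k
      have h2 := ih (fun r => k r / 2)
      have h3 : (2:ℕ) ^ (d * (L + 1)) = 2 ^ d * 2 ^ (d * L) := by
        rw [← pow_add]; ring_nf
      simp only [interleave]
      nlinarith [pow_pos (show 0 < 2 by norm_num) d]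

lemma coord_interleave (d L r : ℕ) (hr : r < d) (k : ℕ → ℕ) :
    mortonCoord d L (r + 1) (interleave d L k) = k r % 2 ^ L := by
  induction L generalizing k with
  | zero => simp [mc_zero, Nat.mod_one]
  | succ L ih =>
      rw [mc_succ]
      set low := ∑ s ∈ Finset.range d, (k s % 2) * 2 ^ s with hlow
      set H := interleave d L (fun s => k s / 2) with hH
      have hIL : interleave d (L + 1) k = low + 2 ^ d * H := rfl
      have hdiv : interleave d (L + 1) k / 2 ^ d = H := by
        rw [hIL, Nat.add_mul_div_left _ _ (pow_pos (show (0:ℕ) < 2 by norm_num) d),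
          Nat.div_eq_of_lt (low_lt d k), zero_add]
      have hbit : interleave d (L + 1) k / 2 ^ r % 2 = k r % 2 := by
        rw [hIL]
        have hd : (2:ℕ) ^ d = 2 ^ (d - r) * 2 ^ r := by rw [← pow_add]; congr 1; omega
        rw [hd, mul_comm ((2:ℕ) ^ (d-r) * 2 ^ r) H, ← mul_assoc,
          Nat.add_mul_div_right _ _ (pow_pos (show (0:ℕ) < 2 by norm_num) r)]
        have he : (2:ℕ) ^ (d - r) = 2 * 2 ^ (d - r - 1) := by
          rw [← pow_succ']; congr 1; omega
        rw [he, show H * (2 * 2 ^ (d - r - 1)) = H * 2 ^ (d - r - 1) * 2 by ring,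
          Nat.add_mul_mod_self_right]
        exact bitvec_div d r hr (fun s => k s % 2)
          (fun s => Nat.lt_succ_iff.mp (Nat.mod_lt _ (by norm_num)))
      rw [hbit, hdiv, ih]
      have : (2:ℕ) ^ (L + 1) = 2 * 2 ^ L := by ring
      rw [this, Nat.mod_mul]

lemma interleave_coord (d L Q : ℕ) (hQ : Q < 2 ^ (d * L)) :
    interleave d L (fun r => mortonCoord d L (r + 1) Q) = Q := by
  induction L generalizing Q with
  | zero =>
      simp only [Nat.mul_zero, pow_zero, Nat.lt_one_iff] at hQ
      subst hQ; rfl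
  | succ L ih =>
      have hQd : Q / 2 ^ d < 2 ^ (d * L) := by
        apply Nat.div_lt_of_lt_mul
        calc Q < 2 ^ (d * (L + 1)) := hQ
        _ = 2 ^ d * 2 ^ (d * L) := by rw [← pow_add]; ring_nf
      simp only [interleave]
      have h1 : ∀ r, mortonCoord d (L + 1) (r + 1) Q % 2 = Q / 2 ^ r % 2 := by
        intro r; rw [mc_succ]; omega
      have h2 : (fun r => mortonCoord d (L + 1) (r + 1) Q / 2)
          = fun r => mortonCoord d L (r + 1) (Q / 2 ^ d) := by
        funext r; rw [mc_succ]; omega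
      rw [h2, ih _ hQd]
      calc (∑ r ∈ Finset.range d, (mortonCoord d (L+1) (r+1) Q % 2) * 2 ^ r) + 2 ^ d * (Q / 2 ^ d)
          = (∑ r ∈ Finset.range d, (Q / 2 ^ r % 2) * 2 ^ r) + 2 ^ d * (Q / 2 ^ d) := by
            congr 1; exact Finset.sum_congr rfl fun r _ => by rw [h1]
        _ = Q % 2 ^ d + 2 ^ d * (Q / 2 ^ d) := by rw [sum_bits_mod]
        _ = Q := Nat.mod_add_div _ _

lemma interleave_mono (d L : ℕ) (k m : ℕ → ℕ)
    (hkm : ∀ r, r < d → k r ≤ m r) (hm : ∀ r, r < d → m r < 2 ^ L) :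
    interleave d L k ≤ interleave d L m := by
  induction L generalizing k m with
  | zero => simp [interleave]
  | succ L ih =>
      have hk2 : ∀ r, r < d → k r / 2 ≤ m r / 2 := fun r hr => Nat.div_le_div_right (hkm r hr)
      have hm2 : ∀ r, r < d → m r / 2 < 2 ^ L := by
        intro r hr
        have := hm r hr
        have : m r < 2 ^ L * 2 := by rw [show (2:ℕ)^L*2 = 2^(L+1) by ring]; exact this
        omega
      have hH := ih _ _ hk2 hm2
      simp only [interleave]
      rcases eq_or_lt_of_le hH with heq | hlt
      · have hcoord : ∀ r, r < d → k r / 2 = m r / 2 := by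
          intro r hr
          have e1 := coord_interleave d L r hr (fun s => k s / 2)
          have e2 := coord_interleave d L r hr (fun s => m s / 2)
          rw [heq, e2] at e1
          have b1 : k r / 2 < 2 ^ L := lt_of_le_of_lt (hk2 r hr) (hm2 r hr)
          have b2 : m r / 2 < 2 ^ L := hm2 r hr
          rw [Nat.mod_eq_of_lt b2, Nat.mod_eq_of_lt b1] at e1
          omega
        have hlowle : ∑ r ∈ Finset.range d, (k r % 2) * 2 ^ r
            ≤ ∑ r ∈ Finset.range d, (m r % 2) * 2 ^ r := by
          apply Finset.sum_le_sum
          intro r hr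
          have hr' := Finset.mem_range.mp hr
          have := hcoord r hr'
          have := hkm r hr'
          have : k r % 2 ≤ m r % 2 := by omega
          exact Nat.mul_le_mul_right _ this
        exact Nat.add_le_add hlowle (by rw [heq])
      · have h1 := low_lt d k
        have h2 : 2 ^ d * interleave d L (fun r => k r / 2) + 2 ^ d
            ≤ 2 ^ d * interleave d L (fun r => m r / 2) := by
          calc 2 ^ d * interleave d L (fun r => k r / 2) + 2 ^ d
              = 2 ^ d * (interleave d L (fun r => k r / 2) + 1) := by ring
            _ ≤ 2 ^ d * interleave d L (fun r => m r / 2) :=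
                Nat.mul_le_mul_left _ hlt
        omega

end MortonAux

namespace MortonAux

lemma star_closed (d L Qend : ℕ) (hQend : Qend < 2 ^ (d * L)) :
    ∀ x ∈ ⋃ Q ∈ Set.Iic Qend, mortonOmega d L Q,
      segment ℝ (fun _ : Fin d => (1 : ℝ) / 2 ^ (L + 1)) x
        ⊆ ⋃ Q ∈ Set.Iic Qend, mortonOmega d L Q := by
  intro x hx y hy
  simp only [Set.mem_iUnion, Set.mem_Iic, exists_prop] at hx ⊢
  obtain ⟨Q, hQle, hxQ⟩ := hx
  obtain ⟨a, b, ha, hb, hab, hy⟩ := hy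
  have hQlt : Q < 2 ^ (d * L) := lt_of_le_of_lt hQle hQend
  -- the target quadrant
  set kf : ℕ → ℕ := fun r =>
    if h : r < d then min (mortonCoord d L (r + 1) Q) ⌊(2 : ℝ) ^ L * y ⟨r, h⟩⌋₊ else 0
    with hkf
  refine ⟨interleave d L kf, ?_, ?_⟩
  · have hmono : interleave d L kf ≤ interleave d L (fun r => mortonCoord d L (r + 1) Q) := by
      apply interleave_mono
      · intro r hr
        simp only [hkf, dif_pos hr]
        exact min_le_left _ _
      · intro r hr
        exact mc_lt d L r Q
    calc interleave d L kf ≤ _ := hmono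
      _ = Q := interleave_coord d L Q hQlt
      _ ≤ Qend := hQle
  · intro r
    have hrd : (r : ℕ) < d := r.isLt
    have hk : kf (r : ℕ) = min (mortonCoord d L ((r : ℕ) + 1) Q) ⌊(2 : ℝ) ^ L * y r⌋₊ := by
      simp only [hkf, dif_pos hrd]
    have hcoord : mortonCoord d L ((r : ℕ) + 1) (interleave d L kf) = kf (r : ℕ) := by
      rw [coord_interleave d L (r : ℕ) hrd kf]
      apply Nat.mod_eq_of_lt
      exact lt_of_le_of_lt (hk ▸ min_le_left _ _) (mc_lt d L (r : ℕ) Q)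
    set q : ℕ := mortonCoord d L ((r : ℕ) + 1) Q with hq
    obtain ⟨hx1, hx2⟩ := hxQ r
    have hpow : (0 : ℝ) < 2 ^ L := by positivity
    have hxr0 : (q : ℝ) ≤ 2 ^ L * x r := by
      rw [div_le_iff₀ hpow] at hx1; linarith [hx1]
    have hxr1 : 2 ^ L * x r ≤ (q : ℝ) + 1 := by
      rw [le_div_iff₀ hpow] at hx2; linarith [hx2]
    have hyr : y r = a * (1 / 2 ^ (L + 1)) + b * x r := by
      rw [← hy]; simp [Pi.add_apply]
    set u : ℝ := 2 ^ L * y r with hu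
    have hu' : u = a / 2 + b * (2 ^ L * x r) := by
      rw [hu, hyr]
      have : (2 : ℝ) ^ (L + 1) = 2 ^ L * 2 := by ring
      field_simp [this]
      ring
    have hu0 : 0 ≤ u := by
      rw [hu']
      have : (0:ℝ) ≤ 2 ^ L * x r := le_trans (by positivity) hxr0
      positivity
    have huq : u ≤ (q : ℝ) + 1 := by
      rw [hu']
      have h1 : b * (2 ^ L * x r) ≤ b * ((q : ℝ) + 1) := by
        apply mul_le_mul_of_nonneg_left hxr1 hb
      have h2 : a / 2 ≤ a * ((q : ℝ) + 1) := by
        have hq1 : (1 : ℝ) / 2 ≤ (q : ℝ) + 1 := by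
          have : (0:ℝ) ≤ (q:ℝ) := Nat.cast_nonneg q
          linarith
        calc a / 2 = a * (1/2) := by ring
          _ ≤ a * ((q:ℝ)+1) := mul_le_mul_of_nonneg_left hq1 ha
      nlinarith
    have hlow : (kf (r : ℕ) : ℝ) ≤ u := by
      have h1 : kf (r : ℕ) ≤ ⌊u⌋₊ := hk ▸ min_le_right _ _
      calc (kf (r : ℕ) : ℝ) ≤ (⌊u⌋₊ : ℝ) := Nat.cast_le.mpr h1
        _ ≤ u := Nat.floor_le hu0
    have hhigh : u ≤ (kf (r : ℕ) : ℝ) + 1 := by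
      rcases le_total q ⌊u⌋₊ with h | h
      · have : kf (r : ℕ) = q := by rw [hk]; exact min_eq_left h
        rw [this]; exact huq
      · have hkr : kf (r : ℕ) = ⌊u⌋₊ := by rw [hk]; exact min_eq_right h
        rw [hkr]
        exact le_of_lt (Nat.lt_floor_add_one u)
    constructor
    · rw [hcoord, div_le_iff₀ hpow]
      calc (kf (r:ℕ) : ℝ) ≤ u := hlow
        _ = y r * 2 ^ L := by rw [hu]; ring
    · rw [hcoord, le_div_iff₀ hpow]
      calc y r * 2 ^ L = u := by rw [hu]; ring
        _ ≤ (kf (r:ℕ) : ℝ) + 1 := hhigh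

end MortonAux

/-- For any level-`L` quadrant `Qend`, the interior of `Y₀ = ⋃_{Q=0}^{Qend} Ω(Q)` is
star-shaped with respect to the midpoint `(2^{-L-1}, …, 2^{-L-1})` of `Ω(0)`. -/
theorem morton_initial_union_starshaped (d L Qend : ℕ) (hd : 1 ≤ d)
    (hQend : Qend < 2 ^ (d * L)) :
    StarShapedWrt (interior (⋃ Q ∈ Set.Iic Qend, mortonOmega d L Q))
      (fun _ : Fin d => (1 : ℝ) / 2 ^ (L + 1)) := by
  set c : Fin d → ℝ := fun _ => (1 : ℝ) / 2 ^ (L + 1) with hc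
  set U : Set (Fin d → ℝ) := ⋃ Q ∈ Set.Iic Qend, mortonOmega d L Q with hU
  have hstar := MortonAux.star_closed d L Qend hQend
  have hcint : c ∈ interior U := by
    rw [mem_interior]
    refine ⟨Set.pi Set.univ (fun _ : Fin d => Set.Ioo (0:ℝ) (1 / 2 ^ L)), ?_, ?_, ?_⟩
    · intro z hz
      have hz' : ∀ r : Fin d, 0 < z r ∧ z r < 1 / 2 ^ L := by
        intro r; exact hz r (Set.mem_univ r)
      have hz0 : z ∈ mortonOmega d L 0 := by
        intro r
        have hmc : mortonCoord d L ((r : ℕ) + 1) 0 = 0 := by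
          simp [mortonCoord]
        rw [hmc]
        obtain ⟨h1, h2⟩ := hz' r
        constructor
        · simpa using le_of_lt h1
        · simpa using le_of_lt h2
      exact Set.mem_biUnion (Set.mem_Iic.mpr (Nat.zero_le Qend)) hz0
    · exact isOpen_set_pi Set.finite_univ (fun _ _ => isOpen_Ioo)
    · intro r _
      constructor
      · positivity
      · rw [hc]
        have h2 : (2:ℝ) ^ (L + 1) = 2 ^ L * 2 := by ring
        rw [h2, div_lt_div_iff₀ (by positivity) (by positivity)]
        nlinarith [pow_pos (show (0:ℝ) < 2 by norm_num) L]
  refine ⟨hcint, ?_⟩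
  intro x hx y hy
  ·
    obtain ⟨a, b, ha, hb, hab, hy⟩ := hy
    rcases eq_or_lt_of_le hb with hb0 | hbpos
    · have : y = c := by
        rw [← hy, ← hb0]
        have : a = 1 := by linarith
        simp [this]
      rw [this]; exact hcint
    · rw [mem_interior_iff_mem_nhds, Metric.mem_nhds_iff] at hx
      obtain ⟨ε, hε, hball⟩ := hx
      rw [mem_interior]
      refine ⟨Metric.ball y (b * ε), ?_, Metric.isOpen_ball,
        Metric.mem_ball_self (by positivity)⟩
      intro z hz
      set w : Fin d → ℝ := x + b⁻¹ • (z - y) with hw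
      have hwx : w ∈ Metric.ball x ε := by
        rw [Metric.mem_ball, dist_eq_norm]
        have : w - x = b⁻¹ • (z - y) := by rw [hw]; abel
        rw [this, norm_smul]
        have : ‖z - y‖ = dist z y := (dist_eq_norm z y).symm
        rw [this, Real.norm_eq_abs, abs_of_pos (by positivity)]
        rw [Metric.mem_ball] at hz
        calc b⁻¹ * dist z y < b⁻¹ * (b * ε) := by
              apply mul_lt_mul_of_pos_left hz (by positivity)
          _ = ε := by field_simp
      have hwU : w ∈ U := hball hwx
      have hzseg : z ∈ segment ℝ c w := by
        refine ⟨a, b, ha, le_of_lt hbpos, hab, ?_⟩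
        rw [hw, smul_add, smul_smul, mul_inv_cancel₀ (ne_of_gt hbpos), one_smul, ← hy]
        abel
      exact hstar w hwU hzseg
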